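/- For every nontrivial connected simple graph G, γ_{V,E}(G) ≥ γ_{E,V}(G) does not hold in general nor does the reverse; however the following chain holds: γ_{V,E}(G) = γ_{V,V∪E}(G) ≥ max(γ''(G), γ(G), γ'(G)) and γ_{E,V}(G) = γ_{E,V∪E}(G) ≥ max(γ''(G), γ(G), γ'(G)). -/

import Mathlib

/-- Two elements (vertices or edges) of a graph are *associated* if they are
adjacent or incident. -/
def elemAssoc {V : Type*} (G : SimpleGraph V) : V ⊕ Sym2 V → V ⊕ Sym2 V → Prop
  | .inl u, .inl v => G.Adj u v
  | .inl u, .inr e => u ∈ e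
  | .inr e, .inl u => u ∈ e
  | .inr e, .inr f => e ≠ f ∧ ∃ u, u ∈ e ∧ u ∈ f

/-- The set of vertex-elements. -/
def vertElems (V : Type*) : Set (V ⊕ Sym2 V) := Set.range Sum.inl

/-- The set of edge-elements of `G`. -/
def edgeElems {V : Type*} (G : SimpleGraph V) : Set (V ⊕ Sym2 V) :=
  Sum.inr '' G.edgeSet

/-- `A` dominates `W`: every element of `W \ (A ∩ W)` is associated to an element of `A`. -/
def Dominates {V : Type*} (G : SimpleGraph V) (A W : Set (V ⊕ Sym2 V)) : Prop :=
  ∀ w ∈ W, w ∉ A → ∃ a ∈ A, elemAssoc G a w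

/-- `γ_{U,W}(G)`: minimum cardinality of a subset `A ⊆ U` dominating `W`. -/
noncomputable def gammaUW {V : Type*} (G : SimpleGraph V)
    (U W : Set (V ⊕ Sym2 V)) : ℕ :=
  sInf {n | ∃ A ⊆ U, Dominates G A W ∧ A.ncard = n}



section helpers
variable {V : Type*} {G : SimpleGraph V}

lemma gamma_le {A U W : Set (V ⊕ Sym2 V)} (hA : A ⊆ U) (hd : Dominates G A W) :
    gammaUW G U W ≤ A.ncard :=
  Nat.sInf_le ⟨A, hA, hd, rfl⟩

lemma le_gamma {m : ℕ} {U W : Set (V ⊕ Sym2 V)}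
    (hne : ∃ A ⊆ U, Dominates G A W)
    (h : ∀ A ⊆ U, Dominates G A W → m ≤ A.ncard) : m ≤ gammaUW G U W := by
  obtain ⟨A, hA, hd⟩ := hne
  have hmem : gammaUW G U W ∈ {n | ∃ A ⊆ U, Dominates G A W ∧ A.ncard = n} :=
    Nat.sInf_mem ⟨A.ncard, A, hA, hd, rfl⟩
  obtain ⟨B, hB, hBd, hBc⟩ := hmem
  exact hBc ▸ h B hB hBd

lemma gamma_mono {U1 W1 U2 W2 : Set (V ⊕ Sym2 V)}
    (hne : ∃ A ⊆ U1, Dominates G A W1)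
    (h : ∀ A ⊆ U1, Dominates G A W1 →
      ∃ B ⊆ U2, Dominates G B W2 ∧ B.ncard ≤ A.ncard) :
    gammaUW G U2 W2 ≤ gammaUW G U1 W1 := by
  obtain ⟨A, hA, hd⟩ := hne
  have hmem : gammaUW G U1 W1 ∈ {n | ∃ A ⊆ U1, Dominates G A W1 ∧ A.ncard = n} :=
    Nat.sInf_mem ⟨A.ncard, A, hA, hd, rfl⟩
  obtain ⟨C, hC, hCd, hCc⟩ := hmem
  obtain ⟨B, hB, hBd, hBc⟩ := h C hC hCd
  exact le_trans (gamma_le hB hBd) (hCc ▸ hBc)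

lemma exists_adj (hc : G.Connected) (hn : Nontrivial V) (v : V) : ∃ u, G.Adj v u := by
  obtain ⟨w, hw⟩ := exists_ne v
  obtain ⟨p⟩ := hc.preconnected v w
  cases p with
  | nil => exact absurd rfl hw.symm
  | cons h p' => exact ⟨_, h⟩

end helpers

set_option linter.unusedSectionVars false
section transfer
variable {V : Type*} [Fintype V] {G : SimpleGraph V} {A : Set (V ⊕ Sym2 V)}

lemma inr_not_mem_of_subset_vert (hA : A ⊆ vertElems V) (e : Sym2 V) :
    (Sum.inr e : V ⊕ Sym2 V) ∉ A := fun h => by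
  obtain ⟨x, hx⟩ := hA h; exact Sum.inl_ne_inr hx

lemma inl_not_mem_of_subset_edge (hA : A ⊆ edgeElems G) (v : V) :
    (Sum.inl v : V ⊕ Sym2 V) ∉ A := fun h => by
  obtain ⟨f, _, hfe⟩ := hA h; exact Sum.inr_ne_inl hfe

lemma L1 (hc : G.Connected) (hn : Nontrivial V)
    (hA : A ⊆ vertElems V) (hd : Dominates G A (edgeElems G)) :
    Dominates G A (vertElems V ∪ edgeElems G) := by
  rintro w hw hwA
  rcases hw with hw | hw
  · obtain ⟨v, rfl⟩ := hw
    obtain ⟨u, hu⟩ := exists_adj hc hn v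
    obtain ⟨a, haA, hassoc⟩ := hd (Sum.inr s(v,u)) ⟨_, hu, rfl⟩
      (inr_not_mem_of_subset_vert hA _)
    obtain ⟨x, rfl⟩ := hA haA
    have hx : x ∈ s(v,u) := hassoc
    rcases Sym2.mem_iff.mp hx with rfl | rfl
    · exact absurd haA hwA
    · exact ⟨_, haA, hu.symm⟩
  · exact hd w hw hwA

lemma L2 (hA : A ⊆ edgeElems G) (hd : Dominates G A (vertElems V)) :
    Dominates G A (vertElems V ∪ edgeElems G) := by
  rintro w hw hwA
  rcases hw with hw | hw
  · exact hd w hw hwA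
  · obtain ⟨e, _, rfl⟩ := hw
    obtain ⟨a, haA, hassoc⟩ := hd (Sum.inl e.out.1) ⟨_, rfl⟩
      (inl_not_mem_of_subset_edge hA _)
    obtain ⟨f, _, rfl⟩ := hA haA
    have huf : e.out.1 ∈ f := hassoc
    refine ⟨_, haA, ?_⟩
    show f ≠ e ∧ ∃ u, u ∈ f ∧ u ∈ e
    exact ⟨fun h => hwA (h ▸ haA), e.out.1, huf, Sym2.out_fst_mem e⟩

lemma L5 (hA : A ⊆ edgeElems G) (hd : Dominates G A (vertElems V)) :
    Dominates G A (edgeElems G) :=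
  fun w hw hwA => L2 hA hd w (Or.inr hw) hwA

lemma L3 (hc : G.Connected) (hn : Nontrivial V)
    (hA : A ⊆ vertElems V) (hd : Dominates G A (edgeElems G)) :
    ∃ B ⊆ edgeElems G, Dominates G B (edgeElems G) ∧ B.ncard ≤ A.ncard := by
  classical
  choose nbr hnbr using exists_adj hc hn
  let g : V ⊕ Sym2 V → V ⊕ Sym2 V := Sum.elim (fun v => Sum.inr s(v, nbr v)) Sum.inr
  refine ⟨g '' A, ?_, ?_, Set.ncard_image_le A.toFinite⟩
  · rintro x ⟨a, haA, rfl⟩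
    obtain ⟨v, rfl⟩ := hA haA
    exact ⟨s(v, nbr v), hnbr v, rfl⟩
  · rintro w hw hwB
    obtain ⟨e, he, rfl⟩ := hw
    obtain ⟨a, haA, hassoc⟩ := hd (Sum.inr e) ⟨e, he, rfl⟩
      (inr_not_mem_of_subset_vert hA _)
    obtain ⟨v, rfl⟩ := hA haA
    have hv : v ∈ e := hassoc
    refine ⟨Sum.inr s(v, nbr v), ⟨Sum.inl v, haA, rfl⟩, ?_⟩
    show s(v, nbr v) ≠ e ∧ ∃ u, u ∈ s(v, nbr v) ∧ u ∈ e
    refine ⟨?_, v, Sym2.mem_mk_left _ _, hv⟩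
    rintro rfl
    exact hwB ⟨Sum.inl v, haA, rfl⟩

lemma L4 (hA : A ⊆ edgeElems G) (hd : Dominates G A (vertElems V)) :
    ∃ B ⊆ vertElems V, Dominates G B (vertElems V) ∧ B.ncard ≤ A.ncard := by
  classical
  let g : V ⊕ Sym2 V → V ⊕ Sym2 V := Sum.elim Sum.inl (fun e => Sum.inl e.out.1)
  refine ⟨g '' A, ?_, ?_, Set.ncard_image_le A.toFinite⟩
  · rintro x ⟨a, haA, rfl⟩
    obtain ⟨f, _, rfl⟩ := hA haA
    exact ⟨_, rfl⟩
  · rintro w hw hwB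
    obtain ⟨v, rfl⟩ := hw
    obtain ⟨a, haA, hassoc⟩ := hd (Sum.inl v) ⟨v, rfl⟩
      (inl_not_mem_of_subset_edge hA _)
    obtain ⟨f, hf, rfl⟩ := hA haA
    have hvf : v ∈ f := hassoc
    have hne : f.out.1 ≠ v := by
      rintro rfl; exact hwB ⟨Sum.inr f, haA, rfl⟩
    have hfeq : f = s(f.out.1, v) :=
      (Sym2.mem_and_mem_iff hne).mp ⟨Sym2.out_fst_mem f, hvf⟩
    refine ⟨Sum.inl f.out.1, ⟨Sum.inr f, haA, rfl⟩, ?_⟩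
    show G.Adj f.out.1 v
    exact (SimpleGraph.mem_edgeSet G).mp (hfeq ▸ hf)

-- nonemptiness witnesses
lemma wV : Dominates G (vertElems V) (edgeElems G) := by
  rintro w ⟨e, he, rfl⟩ _
  exact ⟨Sum.inl e.out.1, ⟨_, rfl⟩, Sym2.out_fst_mem e⟩

lemma wE (hc : G.Connected) (hn : Nontrivial V) :
    Dominates G (edgeElems G) (vertElems V) := by
  rintro w ⟨v, rfl⟩ _
  obtain ⟨u, hu⟩ := exists_adj hc hn v
  exact ⟨Sum.inr s(v,u), ⟨_, hu, rfl⟩, Sym2.mem_mk_left _ _⟩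

end transfer

lemma generalPart {V : Type*} [Fintype V] (G : SimpleGraph V)
    (hc : G.Connected) (hn : Nontrivial V) :
    (gammaUW G (vertElems V) (edgeElems G)
        = gammaUW G (vertElems V) (vertElems V ∪ edgeElems G) ∧
      gammaUW G (vertElems V) (edgeElems G) ≥
        max (gammaUW G (vertElems V ∪ edgeElems G) (vertElems V ∪ edgeElems G))
          (max (gammaUW G (vertElems V) (vertElems V))
            (gammaUW G (edgeElems G) (edgeElems G)))) ∧
    (gammaUW G (edgeElems G) (vertElems V)
        = gammaUW G (edgeElems G) (vertElems V ∪ edgeElems G) ∧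
      gammaUW G (edgeElems G) (vertElems V) ≥
        max (gammaUW G (vertElems V ∪ edgeElems G) (vertElems V ∪ edgeElems G))
          (max (gammaUW G (vertElems V) (vertElems V))
            (gammaUW G (edgeElems G) (edgeElems G)))) := by
  have hneVE : ∃ A ⊆ vertElems V, Dominates G A (edgeElems G) :=
    ⟨_, subset_rfl, wV⟩
  have hneVU : ∃ A ⊆ vertElems V, Dominates G A (vertElems V ∪ edgeElems G) :=
    ⟨_, subset_rfl, L1 hc hn subset_rfl wV⟩
  have hneEV : ∃ A ⊆ edgeElems G, Dominates G A (vertElems V) :=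
    ⟨_, subset_rfl, wE hc hn⟩
  have hneEU : ∃ A ⊆ edgeElems G, Dominates G A (vertElems V ∪ edgeElems G) :=
    ⟨_, subset_rfl, L2 subset_rfl (wE hc hn)⟩
  have eqV : gammaUW G (vertElems V) (edgeElems G)
      = gammaUW G (vertElems V) (vertElems V ∪ edgeElems G) :=
    le_antisymm
      (gamma_mono hneVU (fun A hA hd =>
        ⟨A, hA, fun w hw hwA => hd w (Or.inr hw) hwA, le_rfl⟩))
      (gamma_mono hneVE (fun A hA hd => ⟨A, hA, L1 hc hn hA hd, le_rfl⟩))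
  have eqE : gammaUW G (edgeElems G) (vertElems V)
      = gammaUW G (edgeElems G) (vertElems V ∪ edgeElems G) :=
    le_antisymm
      (gamma_mono hneEU (fun A hA hd =>
        ⟨A, hA, fun w hw hwA => hd w (Or.inl hw) hwA, le_rfl⟩))
      (gamma_mono hneEV (fun A hA hd => ⟨A, hA, L2 hA hd, le_rfl⟩))
  have b1 : gammaUW G (vertElems V ∪ edgeElems G) (vertElems V ∪ edgeElems G)
      ≤ gammaUW G (vertElems V) (vertElems V ∪ edgeElems G) :=
    gamma_mono hneVU (fun A hA hd =>
      ⟨A, hA.trans Set.subset_union_left, hd, le_rfl⟩)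
  have b2 : gammaUW G (vertElems V) (vertElems V)
      ≤ gammaUW G (vertElems V) (vertElems V ∪ edgeElems G) :=
    gamma_mono hneVU (fun A hA hd =>
      ⟨A, hA, fun w hw hwA => hd w (Or.inl hw) hwA, le_rfl⟩)
  have b3 : gammaUW G (edgeElems G) (edgeElems G)
      ≤ gammaUW G (vertElems V) (edgeElems G) :=
    gamma_mono hneVE (fun A hA hd => L3 hc hn hA hd)
  have c1 : gammaUW G (vertElems V ∪ edgeElems G) (vertElems V ∪ edgeElems G)
      ≤ gammaUW G (edgeElems G) (vertElems V ∪ edgeElems G) :=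
    gamma_mono hneEU (fun A hA hd =>
      ⟨A, hA.trans Set.subset_union_right, hd, le_rfl⟩)
  have c2 : gammaUW G (vertElems V) (vertElems V)
      ≤ gammaUW G (edgeElems G) (vertElems V) :=
    gamma_mono hneEV (fun A hA hd => L4 hA hd)
  have c3 : gammaUW G (edgeElems G) (edgeElems G)
      ≤ gammaUW G (edgeElems G) (vertElems V) :=
    gamma_mono hneEV (fun A hA hd => ⟨A, hA, L5 hA hd, le_rfl⟩)
  exact ⟨⟨eqV, max_le (eqV ▸ b1) (max_le (eqV ▸ b2) b3)⟩,
    ⟨eqE, max_le (eqE ▸ c1) (max_le c2 c3)⟩⟩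

open SimpleGraph in
lemma example1 : gammaUW (⊤ : SimpleGraph (Fin 4)) (vertElems (Fin 4)) (edgeElems ⊤)
    > gammaUW (⊤ : SimpleGraph (Fin 4)) (edgeElems ⊤) (vertElems (Fin 4)) := by
  have hc : (⊤ : SimpleGraph (Fin 4)).Connected := connected_top
  have hub : gammaUW (⊤ : SimpleGraph (Fin 4)) (edgeElems ⊤) (vertElems (Fin 4)) ≤ 2 := by
    have hsub : ({Sum.inr s((0:Fin 4),1), Sum.inr s((2:Fin 4),3)} :
        Set (Fin 4 ⊕ Sym2 (Fin 4))) ⊆ edgeElems ⊤ := by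
      rintro x (rfl | rfl)
      · exact ⟨s((0:Fin 4),1), (SimpleGraph.mem_edgeSet _).mpr (by decide), rfl⟩
      · exact ⟨s((2:Fin 4),3), (SimpleGraph.mem_edgeSet _).mpr (by decide), rfl⟩
    have hdom : Dominates ⊤ ({Sum.inr s((0:Fin 4),1), Sum.inr s((2:Fin 4),3)} :
        Set (Fin 4 ⊕ Sym2 (Fin 4))) (vertElems (Fin 4)) := by
      rintro w ⟨v, rfl⟩ _
      fin_cases v
      · exact ⟨Sum.inr s((0:Fin 4),1), Or.inl rfl,
          show (0:Fin 4) ∈ s((0:Fin 4),(1:Fin 4)) by decide⟩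
      · exact ⟨Sum.inr s((0:Fin 4),1), Or.inl rfl,
          show (1:Fin 4) ∈ s((0:Fin 4),(1:Fin 4)) by decide⟩
      · exact ⟨Sum.inr s((2:Fin 4),3), Or.inr rfl,
          show (2:Fin 4) ∈ s((2:Fin 4),(3:Fin 4)) by decide⟩
      · exact ⟨Sum.inr s((2:Fin 4),3), Or.inr rfl,
          show (3:Fin 4) ∈ s((2:Fin 4),(3:Fin 4)) by decide⟩
    have hcard : ({Sum.inr s((0:Fin 4),1), Sum.inr s((2:Fin 4),3)} :
        Set (Fin 4 ⊕ Sym2 (Fin 4))).ncard = 2 :=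
      Set.ncard_pair (by simp only [ne_eq, Sum.inr.injEq]; decide)
    exact hcard ▸ gamma_le hsub hdom
  have hlb : 3 ≤ gammaUW (⊤ : SimpleGraph (Fin 4)) (vertElems (Fin 4)) (edgeElems ⊤) := by
    refine le_gamma ⟨_, subset_rfl, wV⟩ ?_
    intro A hA hd
    by_contra h
    push_neg at h
    set S : Set (Fin 4) := {v | Sum.inl v ∈ A} with hS
    have hAS : A = Sum.inl '' S := by
      ext x
      constructor
      · intro hx; obtain ⟨v, rfl⟩ := hA hx; exact ⟨v, hx, rfl⟩
      · rintro ⟨v, hv, rfl⟩; exact hv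
    have hcard : S.ncard ≤ 2 := by
      have := Set.ncard_image_of_injective S (Sum.inl_injective (β := Sym2 (Fin 4)))
      rw [hAS, this] at h; omega
    have hcompl : 1 < Sᶜ.ncard := by
      have h4 := Set.ncard_add_ncard_compl S
      have : Nat.card (Fin 4) = 4 := by simp
      omega
    obtain ⟨u, v, hu, hv, huv⟩ := (Set.one_lt_ncard_iff).mp hcompl
    have he : s(u,v) ∈ (⊤ : SimpleGraph (Fin 4)).edgeSet :=
      (SimpleGraph.mem_edgeSet _).mpr huv
    obtain ⟨a, haA, hassoc⟩ := hd (Sum.inr s(u,v)) ⟨_, he, rfl⟩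
      (inr_not_mem_of_subset_vert hA _)
    obtain ⟨w, rfl⟩ := hA haA
    have hw : w ∈ s(u,v) := hassoc
    rcases Sym2.mem_iff.mp hw with rfl | rfl
    · exact hu haA
    · exact hv haA
  omega

lemma example2 : gammaUW (SimpleGraph.pathGraph 3) (edgeElems (SimpleGraph.pathGraph 3))
      (vertElems (Fin 3))
    > gammaUW (SimpleGraph.pathGraph 3) (vertElems (Fin 3))
      (edgeElems (SimpleGraph.pathGraph 3)) := by
  have hc : (SimpleGraph.pathGraph 3).Connected := SimpleGraph.pathGraph_connected 2
  have hub : gammaUW (SimpleGraph.pathGraph 3) (vertElems (Fin 3))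
      (edgeElems (SimpleGraph.pathGraph 3)) ≤ 1 := by
    have hsub : ({Sum.inl (1 : Fin 3)} : Set (Fin 3 ⊕ Sym2 (Fin 3))) ⊆ vertElems (Fin 3) :=
      Set.singleton_subset_iff.mpr ⟨1, rfl⟩
    have hdom : Dominates (SimpleGraph.pathGraph 3)
        ({Sum.inl (1 : Fin 3)} : Set (Fin 3 ⊕ Sym2 (Fin 3)))
        (edgeElems (SimpleGraph.pathGraph 3)) := by
      rintro w ⟨e, he, rfl⟩ _
      refine ⟨Sum.inl (1:Fin 3), rfl, ?_⟩
      induction e using Sym2.ind with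
      | _ a b =>
        rw [SimpleGraph.mem_edgeSet, SimpleGraph.pathGraph_adj] at he
        show (1 : Fin 3) ∈ s(a, b)
        rw [Sym2.mem_iff]
        have ha := a.isLt
        have hb := b.isLt
        simp only [Fin.ext_iff, Fin.val_one]
        omega
    exact (Set.ncard_singleton _) ▸ gamma_le hsub hdom
  have hlb : 2 ≤ gammaUW (SimpleGraph.pathGraph 3)
      (edgeElems (SimpleGraph.pathGraph 3)) (vertElems (Fin 3)) := by
    refine le_gamma ⟨_, subset_rfl, wE hc inferInstance⟩ ?_
    intro A hA hd
    by_contra h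
    push_neg at h
    have hone : A.ncard ≤ 1 := by omega
    obtain ⟨a0, h0A, h0⟩ := hd (Sum.inl (0:Fin 3)) ⟨0, rfl⟩
      (inl_not_mem_of_subset_edge hA _)
    obtain ⟨e0, he0, rfl⟩ := hA h0A
    obtain ⟨a2, h2A, h2⟩ := hd (Sum.inl (2:Fin 3)) ⟨2, rfl⟩
      (inl_not_mem_of_subset_edge hA _)
    obtain ⟨e2, he2, rfl⟩ := hA h2A
    have heq : (Sum.inr e0 : Fin 3 ⊕ Sym2 (Fin 3)) = Sum.inr e2 :=
      (Set.ncard_le_one A.toFinite).mp hone _ h0A _ h2A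
    have heq2 : e0 = e2 := Sum.inr_injective heq
    have h0e : (0:Fin 3) ∈ e0 := h0
    have h2e : (2:Fin 3) ∈ e0 := heq2 ▸ h2
    have : e0 = s((0:Fin 3), 2) :=
      (Sym2.mem_and_mem_iff (by decide)).mp ⟨h0e, h2e⟩
    rw [this, SimpleGraph.mem_edgeSet, SimpleGraph.pathGraph_adj] at he0
    simp at he0
  omega

theorem stmt19 :
    (∃ (k : ℕ) (G₁ : SimpleGraph (Fin k)), G₁.Connected ∧ Nontrivial (Fin k) ∧
      gammaUW G₁ (vertElems (Fin k)) (edgeElems G₁)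
        > gammaUW G₁ (edgeElems G₁) (vertElems (Fin k))) ∧
    (∃ (k : ℕ) (G₂ : SimpleGraph (Fin k)), G₂.Connected ∧ Nontrivial (Fin k) ∧
      gammaUW G₂ (edgeElems G₂) (vertElems (Fin k))
        > gammaUW G₂ (vertElems (Fin k)) (edgeElems G₂)) ∧
    (∀ (V : Type*) [Fintype V] (G : SimpleGraph V), G.Connected → Nontrivial V →
      (gammaUW G (vertElems V) (edgeElems G)
          = gammaUW G (vertElems V) (vertElems V ∪ edgeElems G) ∧
        gammaUW G (vertElems V) (edgeElems G) ≥
          max (gammaUW G (vertElems V ∪ edgeElems G) (vertElems V ∪ edgeElems G))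
            (max (gammaUW G (vertElems V) (vertElems V))
              (gammaUW G (edgeElems G) (edgeElems G)))) ∧
      (gammaUW G (edgeElems G) (vertElems V)
          = gammaUW G (edgeElems G) (vertElems V ∪ edgeElems G) ∧
        gammaUW G (edgeElems G) (vertElems V) ≥
          max (gammaUW G (vertElems V ∪ edgeElems G) (vertElems V ∪ edgeElems G))
            (max (gammaUW G (vertElems V) (vertElems V))
              (gammaUW G (edgeElems G) (edgeElems G))))) := by
  refine ⟨⟨4, ⊤, SimpleGraph.connected_top, inferInstance, example1⟩,
    ⟨3, SimpleGraph.pathGraph 3, SimpleGraph.pathGraph_connected 2, inferInstance, example2⟩,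
    fun V _ G hc hn => generalPart G hc hn⟩
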